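/- Let (q_σ)_{σ ∈ S_3} be a family of projections in M_6(ℂ), indexed by the symmetric group S_3, with Σ_σ q_σ = 1, and define P_{ij} = Σ_{σ: σ(j)=i} q_σ for i, j ∈ {1,2,3}. Assume that every P_{ij} has rank 2 and that Tr(P_{ij} P_{kl}) = 1 for all indices with i ≠ k and j ≠ l. Then every q_σ has rank 1. -/

import Mathlib

open Matrix Module

/-- A Hermitian idempotent 6×6 complex matrix has rank equal to its trace. -/
lemma rank_eq_trace_of_idem (A : Matrix (Fin 6) (Fin 6) ℂ) (h : A * A = A) :
    (A.rank : ℂ) = A.trace := by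
  have hf : A.mulVecLin ∘ₗ A.mulVecLin = A.mulVecLin := by
    rw [← Matrix.mulVecLin_mul, h]
  obtain ⟨p, hp⟩ := (LinearMap.isProj_iff_isIdempotentElem _).mpr hf
  have hrange : LinearMap.range A.mulVecLin = p := by
    apply le_antisymm
    · rintro x ⟨y, rfl⟩; exact hp.map_mem y
    · intro x hx
      exact ⟨x, hp.map_id x hx⟩
  have htr : LinearMap.trace ℂ (Fin 6 → ℂ) A.mulVecLin = (finrank ℂ p : ℂ) := hp.trace
  have htm : LinearMap.trace ℂ (Fin 6 → ℂ) A.mulVecLin = A.trace := by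
    rw [LinearMap.trace_eq_matrix_trace ℂ (Pi.basisFun ℂ (Fin 6)),
      LinearMap.toMatrix_eq_toMatrix', ← Matrix.toLin'_apply', LinearMap.toMatrix'_toLin']
  have hrk : A.rank = finrank ℂ p := by
    rw [Matrix.rank, hrange]
  rw [hrk, ← htr, htm]

/-- if `(q_σ)_{σ ∈ S_3}` are projections in `M_6(ℂ)` summing to `1`, and the
associated magic matrix `P_{ij} = Σ_{σ(j)=i} q_σ` has all entries of rank `2` and satisfies
`Tr(P_{ij} P_{kl}) = 1` for `i ≠ k`, `j ≠ l`, then every `q_σ` has rank `1`. -/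
theorem minimal_doubly_flat_S3_model (q : Equiv.Perm (Fin 3) → Matrix (Fin 6) (Fin 6) ℂ)
    (hproj : ∀ σ, IsSelfAdjoint (q σ) ∧ IsIdempotentElem (q σ))
    (hsum : ∑ σ, q σ = 1)
    (P : Fin 3 → Fin 3 → Matrix (Fin 6) (Fin 6) ℂ)
    (hP : ∀ i j, P i j = ∑ σ ∈ Finset.univ.filter (fun σ : Equiv.Perm (Fin 3) => σ j = i), q σ)
    (hrank : ∀ i j, (P i j).rank = 2)
    (hflat : ∀ i j k l, i ≠ k → j ≠ l → Matrix.trace (P i j * P k l) = 1) :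
    ∀ σ, (q σ).rank = 1 := by
  have hidem : ∀ σ, q σ * q σ = q σ := fun σ => (hproj σ).2
  have hsa : ∀ σ, (q σ)ᴴ = q σ := fun σ => (hproj σ).1
  -- mutual orthogonality
  have horth : ∀ σ τ, σ ≠ τ → q σ * q τ = 0 := by
    have key : ∀ σ τ : Equiv.Perm (Fin 3), τ ≠ σ → q τ * q σ = 0 := by
      intro σ τ hne
      -- sum over τ' ≠ σ of q σ * q τ' * q σ is zero
      have hsum2 : ∑ τ' ∈ Finset.univ.erase σ, q σ * q τ' * q σ = 0 := by
        have : ∑ τ' ∈ Finset.univ.erase σ, q σ * q τ' * q σ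
            = q σ * (∑ τ' ∈ Finset.univ.erase σ, q τ') * q σ := by
          rw [Finset.mul_sum, Finset.sum_mul]
        rw [this, Finset.sum_erase_eq_sub (Finset.mem_univ σ), hsum, mul_sub, mul_one,
          hidem σ, sub_self, zero_mul]
      -- each term is (q τ' * q σ)ᴴ * (q τ' * q σ), with nonneg real trace
      have hterm : ∀ τ' : Equiv.Perm (Fin 3),
          q σ * q τ' * q σ = (q τ' * q σ)ᴴ * (q τ' * q σ) := by
        intro τ'
        rw [Matrix.conjTranspose_mul, hsa, hsa]
        rw [mul_assoc (q σ) (q τ') (q τ' * q σ), ← mul_assoc (q τ') (q τ') (q σ),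
          hidem τ', ← mul_assoc]
      have htr : ∑ τ' ∈ Finset.univ.erase σ,
          (∑ i, ∑ j, Complex.normSq ((q τ' * q σ) j i) : ℝ) = 0 := by
        have h0 : ((0 : Matrix (Fin 6) (Fin 6) ℂ)).trace = 0 := by simp
        have := congrArg Matrix.trace hsum2
        rw [Matrix.trace_sum] at this
        have heach : ∀ τ' : Equiv.Perm (Fin 3), (q σ * q τ' * q σ).trace
            = ((∑ i, ∑ j, Complex.normSq ((q τ' * q σ) j i) : ℝ) : ℂ) := by
          intro τ'
          rw [hterm τ']
          simp only [Matrix.trace, Matrix.diag, Matrix.mul_apply, Matrix.conjTranspose_apply]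
          push_cast
          congr 1; ext i; congr 1; ext j
          rw [Complex.star_def, ← Complex.normSq_eq_conj_mul_self]
        rw [Finset.sum_congr rfl (fun τ' _ => heach τ')] at this
        simp only [h0] at this
        exact_mod_cast (by push_cast at this ⊢; exact_mod_cast this)
      have hzero : (∑ i, ∑ j, Complex.normSq ((q τ * q σ) j i) : ℝ) = 0 := by
        have hnn : ∀ τ' ∈ Finset.univ.erase σ,
            (0:ℝ) ≤ ∑ i, ∑ j, Complex.normSq ((q τ' * q σ) j i) :=
          fun τ' _ => Finset.sum_nonneg fun i _ =>
            Finset.sum_nonneg fun j _ => Complex.normSq_nonneg _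
        exact (Finset.sum_eq_zero_iff_of_nonneg hnn).mp htr τ (Finset.mem_erase.mpr ⟨hne, Finset.mem_univ τ⟩)
      ext j i
      have h1 : Complex.normSq ((q τ * q σ) j i) = 0 := by
        have hnn : ∀ i ∈ (Finset.univ : Finset (Fin 6)),
            (0:ℝ) ≤ ∑ j, Complex.normSq ((q τ * q σ) j i) :=
          fun i _ => Finset.sum_nonneg fun j _ => Complex.normSq_nonneg _
        have h2 := (Finset.sum_eq_zero_iff_of_nonneg hnn).mp hzero i (Finset.mem_univ i)
        have hnn2 : ∀ j ∈ (Finset.univ : Finset (Fin 6)),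
            (0:ℝ) ≤ Complex.normSq ((q τ * q σ) j i) := fun j _ => Complex.normSq_nonneg _
        exact (Finset.sum_eq_zero_iff_of_nonneg hnn2).mp h2 j (Finset.mem_univ j)
      simpa using Complex.normSq_eq_zero.mp h1
    intro σ τ hne
    exact key τ σ hne
  -- uniqueness of a permutation of Fin 3 given two values
  have huniq : ∀ σ τ : Equiv.Perm (Fin 3), σ 0 = τ 0 → σ 1 = τ 1 → σ = τ := by decide
  intro σ0
  have hA : σ0 ∈ Finset.univ.filter (fun σ : Equiv.Perm (Fin 3) => σ 0 = σ0 0) := by simp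
  have hB : σ0 ∈ Finset.univ.filter (fun σ : Equiv.Perm (Fin 3) => σ 1 = σ0 1) := by simp
  have hPP : P (σ0 0) 0 * P (σ0 1) 1 = q σ0 := by
    rw [hP, hP, Finset.sum_mul_sum]
    rw [Finset.sum_eq_single_of_mem σ0 hA, Finset.sum_eq_single_of_mem σ0 hB]
    · exact hidem σ0
    · intro τ hτ hne
      exact horth σ0 τ (Ne.symm hne)
    · intro σ hσ hne
      apply Finset.sum_eq_zero
      intro τ hτ
      rcases eq_or_ne σ τ with rfl | hst
      · exfalso
        apply hne
        simp only [Finset.mem_filter] at hσ hτ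
        exact huniq σ σ0 hσ.2 hτ.2
      · exact horth σ τ hst
  have htrq : (q σ0).trace = 1 := by
    rw [← hPP]
    exact hflat (σ0 0) 0 (σ0 1) 1 (σ0.injective.ne (by decide)) (by decide)
  have := rank_eq_trace_of_idem (q σ0) (hidem σ0)
  rw [htrq] at this
  exact_mod_cast this
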